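/- For any stationary E ⊆ Lim(ω₁), the conjunction of ♣(E) and CH (2^{ℵ0} = ℵ₁) is equivalent to ◊(E). -/

import Mathlib

open Cardinal Set

/-- The first uncountable ordinal. -/
noncomputable def ω₁ : Ordinal := (aleph 1).ord

/-- The set of limit ordinals below `ω₁`. -/
def LimOmega1 : Set Ordinal := {γ | γ < ω₁ ∧ Order.IsSuccLimit γ}

/-- `C` is a club (closed unbounded) subset of `ω₁`. -/
def IsClubIn (C : Set Ordinal) : Prop :=
  C ⊆ Iio ω₁ ∧
    (∀ δ, δ < ω₁ → δ ≠ 0 → (∀ α < δ, ∃ β ∈ C, α < β ∧ β < δ) → δ ∈ C) ∧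
    (∀ α < ω₁, ∃ β ∈ C, α < β)

/-- `S` is a stationary subset of `ω₁`: it meets every club subset of `ω₁`. -/
def IsStatIn (S : Set Ordinal) : Prop :=
  S ⊆ Iio ω₁ ∧ ∀ C, IsClubIn C → (S ∩ C).Nonempty

/-- The set of ordinals `s` has order type `ω`. -/
def HasOtpOmega (s : Set Ordinal) : Prop :=
  Ordinal.type (Subrel ((· < ·) : Ordinal → Ordinal → Prop) (· ∈ s)) = Ordinal.omega0

/-- `x γ` is a cofinal subset of `γ` of order type `ω`. -/
def IsLadderAt (γ : Ordinal) (s : Set Ordinal) : Prop :=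
  s ⊆ Iio γ ∧ (∀ α < γ, ∃ β ∈ s, α ≤ β) ∧ HasOtpOmega s

/-- `(x γ)_{γ ∈ E}` is a `♣(E)`-sequence. -/
def ClubSeq (E : Set Ordinal) (x : Ordinal → Set Ordinal) : Prop :=
  (∀ γ ∈ E, IsLadderAt γ (x γ)) ∧
    ∀ y : Set Ordinal, y ⊆ Iio ω₁ → #y = aleph 1 → ∃ γ ∈ E, x γ ⊆ y

/-- The principle `♣(E)`. -/
def ClubPrinciple (E : Set Ordinal) : Prop := ∃ x, ClubSeq E x

/-- The principle `◊(E)`. -/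
def DiamondPrinciple (E : Set Ordinal) : Prop :=
  ∃ A : Ordinal → Set Ordinal, (∀ γ ∈ E, A γ ⊆ Iio γ) ∧
    ∀ B : Set Ordinal, B ⊆ Iio ω₁ → IsStatIn {γ ∈ E | B ∩ Iio γ = A γ}

section Helpers

universe u v w

lemma omega1_isLimit : Order.IsSuccLimit (ω₁ : Ordinal.{u}) :=
  Cardinal.isSuccLimit_ord (aleph0_le_aleph 1)

lemma lt_omega1 {γ : Ordinal.{u}} : γ < ω₁ ↔ γ.card < aleph 1 :=
  Cardinal.lt_ord

lemma omega1_pos : (0 : Ordinal.{u}) < ω₁ := omega1_isLimit.pos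

lemma succ_lt_omega1 {γ : Ordinal.{u}} (h : γ < ω₁) : γ + 1 < ω₁ := by
  rw [Ordinal.add_one_eq_succ]
  exact omega1_isLimit.succ_lt h

lemma omega0_lt_omega1 : (Ordinal.omega0 : Ordinal.{u}) < ω₁ := by
  rw [← Cardinal.ord_aleph0]
  exact Cardinal.ord_lt_ord.2 aleph0_lt_aleph_one

lemma nat_sup_lt_omega1 (f : ℕ → Ordinal.{u}) (h : ∀ n, f n < ω₁) : (⨆ n, f n) < ω₁ := by
  refine Ordinal.iSup_lt_ord_lift ?_ h
  show Cardinal.lift.{u} #ℕ < ((aleph 1).ord).cof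
  rw [Cardinal.isRegular_aleph_one.cof_eq]
  simp only [Cardinal.mk_nat, Cardinal.lift_aleph0]
  exact aleph0_lt_aleph_one

lemma lt_sup_chain {b : ℕ → Ordinal.{u}} (hmono : StrictMono b) {α : Ordinal.{u}}
    (h : α < ⨆ n, b n) : ∃ n, α < b n ∧ b n < ⨆ n, b n := by
  rw [Ordinal.lt_iSup_iff] at h
  obtain ⟨n, hn⟩ := h
  exact ⟨n, hn, lt_of_lt_of_le (hmono (Nat.lt_succ_self n)) (Ordinal.le_iSup b (n + 1))⟩

lemma countable_of_subset_Iio {c : Ordinal.{u}} (hc : c < ω₁) {s : Set Ordinal.{u}}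
    (hs : s ⊆ Iio c) : s.Countable := by
  rw [countable_iff_lt_aleph_one]
  calc #s ≤ #(Iio c) := mk_le_mk_of_subset hs
    _ = Cardinal.lift.{u+1} c.card := Ordinal.mk_Iio_ordinal c
    _ < Cardinal.lift.{u+1} (aleph 1) := Cardinal.lift_lt.2 (lt_omega1.1 hc)
    _ = aleph 1 := by rw [lift_aleph, Ordinal.lift_one]

lemma mk_Iio_omega1 : #(Iio (ω₁ : Ordinal.{u})) = aleph 1 := by
  rw [Ordinal.mk_Iio_ordinal]
  show Cardinal.lift.{u+1} ((aleph 1).ord).card = _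
  rw [Cardinal.card_ord, lift_aleph, Ordinal.lift_one]

lemma exists_bound_of_countable {s : Set Ordinal.{u}} (hs : s.Countable)
    (h : ∀ β ∈ s, β < ω₁) : ∃ δ, δ < ω₁ ∧ ∀ β ∈ s, β < δ := by
  rcases s.eq_empty_or_nonempty with rfl | hne
  · exact ⟨1, by simpa using succ_lt_omega1 omega1_pos, by simp⟩
  · obtain ⟨g, rfl⟩ := hs.exists_eq_range hne
    have hsup : (⨆ n, g n) < ω₁ := nat_sup_lt_omega1 g (fun n => h _ ⟨n, rfl⟩)
    refine ⟨(⨆ n, g n) + 1, succ_lt_omega1 hsup, ?_⟩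
    rintro β ⟨n, rfl⟩
    calc g n ≤ ⨆ n, g n := Ordinal.le_iSup g n
      _ < (⨆ n, g n) + 1 := by rw [Ordinal.add_one_eq_succ]; exact Order.lt_succ _

lemma unbounded_of_mk_eq {s : Set Ordinal.{u}} (h2 : #s = aleph 1) {α : Ordinal.{u}}
    (hα : α < ω₁) : ∃ β ∈ s, α < β := by
  by_contra hcon
  push_neg at hcon
  have hsub : s ⊆ Iio (α + 1) := fun β hβ =>
    lt_of_le_of_lt (hcon β hβ) (by rw [Ordinal.add_one_eq_succ]; exact Order.lt_succ _)
  have := countable_of_subset_Iio (succ_lt_omega1 hα) hsub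
  rw [countable_iff_lt_aleph_one, h2] at this
  exact lt_irrefl _ this

lemma mk_eq_aleph1_of_unbounded {s : Set Ordinal.{u}} (h1 : s ⊆ Iio ω₁)
    (h : ∀ α < ω₁, ∃ β ∈ s, α < β) : #s = aleph 1 := by
  have hle : #s ≤ aleph 1 := (mk_le_mk_of_subset h1).trans_eq mk_Iio_omega1
  rcases hle.lt_or_eq with hlt | he
  · exfalso
    have hc : s.Countable := (countable_iff_lt_aleph_one s).2 hlt
    obtain ⟨δ, hδ, hbd⟩ := exists_bound_of_countable hc (fun β hβ => h1 hβ)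
    obtain ⟨β, hβs, hβ⟩ := h δ hδ
    exact absurd (hbd β hβs) (not_lt.2 hβ.le)
  · exact he

lemma hasOtpOmega_range {a : ℕ → Ordinal.{u}} (ha : StrictMono a) :
    HasOtpOmega (range a) := by
  show Ordinal.type (Subrel ((· < ·) : Ordinal → Ordinal → Prop) (· ∈ range a)) = Ordinal.omega0
  have e : ((· < ·) : ℕ → ℕ → Prop) ≃r
      (Subrel ((· < ·) : Ordinal → Ordinal → Prop) (· ∈ range a)) := by
    refine ⟨Equiv.ofInjective a ha.injective, ?_⟩
    intro m n
    show (a m : Ordinal) < a n ↔ m < n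
    exact ha.lt_iff_lt
  have := Ordinal.lift_type_eq.{0, u+1, 0}.2 ⟨e⟩
  rw [Ordinal.type_nat_lt, Ordinal.lift_omega0, Ordinal.lift_uzero] at this
  exact this.symm

lemma CH_lift : ((2 : Cardinal.{v}) ^ ℵ₀ = aleph 1) ↔ ((2 : Cardinal.{0}) ^ ℵ₀ = aleph 1) := by
  have h2 : Cardinal.lift.{v} ((2 : Cardinal.{0}) ^ ℵ₀) = (2 : Cardinal.{v}) ^ ℵ₀ := by
    rw [Cardinal.lift_two_power, Cardinal.lift_aleph0]
  have h1 : Cardinal.lift.{v} (aleph 1 : Cardinal.{0}) = aleph 1 := by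
    rw [lift_aleph, Ordinal.lift_one]
  rw [← h2, ← h1, Cardinal.lift_inj]

lemma CH_transfer : ((2 : Cardinal.{v}) ^ ℵ₀ = aleph 1) ↔ ((2 : Cardinal.{w}) ^ ℵ₀ = aleph 1) :=
  CH_lift.trans CH_lift.symm

end Helpers
section Helpers2

universe u

lemma omega_chain {Q : Ordinal.{u} → Ordinal.{u} → Prop}
    (step : ∀ α, α < ω₁ → ∃ β, β < ω₁ ∧ α < β ∧ Q α β) {α₀ : Ordinal.{u}} (hα₀ : α₀ < ω₁) :
    ∃ b : ℕ → Ordinal.{u}, (∀ n, b n < ω₁) ∧ StrictMono b ∧ α₀ < b 0 ∧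
      (∀ n, Q (b n) (b (n + 1))) := by
  choose F h1 h2 h3 using step
  let f : ℕ → {β : Ordinal.{u} // β < ω₁} := fun n =>
    Nat.rec ⟨F α₀ hα₀, h1 _ _⟩ (fun _ p => ⟨F p.1 p.2, h1 _ _⟩) n
  refine ⟨fun n => (f n).1, fun n => (f n).2, ?_, h2 _ _, fun n => h3 _ _⟩
  have hstep : ∀ n, (f n).1 < (f (n + 1)).1 := fun n => h2 _ _
  exact strictMono_nat_of_lt_succ hstep

lemma exists_ladder {γ : Ordinal.{u}} (hγ : γ < ω₁) (hlim : Order.IsSuccLimit γ) {s : Set Ordinal.{u}}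
    (hcof : ∀ α, α < γ → ∃ β, β ∈ s ∧ α < β ∧ β < γ) :
    ∃ t, t ⊆ s ∧ IsLadderAt γ t := by
  have hc : (Iio γ).Countable := countable_of_subset_Iio hγ subset_rfl
  obtain ⟨g, hg⟩ := hc.exists_eq_range ⟨0, hlim.pos⟩
  have hgmem : ∀ n, g n < γ := by
    intro n
    have : g n ∈ Iio γ := hg ▸ ⟨n, rfl⟩
    exact this
  choose F hF1 hF2 hF3 using hcof
  let f : ℕ → {β : Ordinal.{u} // β ∈ s ∧ β < γ} := fun n =>
    Nat.rec ⟨F 0 hlim.pos, hF1 _ _, hF3 _ _⟩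
      (fun n p => ⟨F (max p.1 (g n)) (max_lt p.2.2 (hgmem n)), hF1 _ _, hF3 _ _⟩) n
  set a : ℕ → Ordinal.{u} := fun n => (f n).1 with ha_def
  have hmono : StrictMono a := by
    refine strictMono_nat_of_lt_succ (fun n => ?_)
    have : max (a n) (g n) < F (max (a n) (g n)) (max_lt (f n).2.2 (hgmem n)) := hF2 _ _
    exact lt_of_le_of_lt (le_max_left _ _) this
  refine ⟨range a, ?_, ?_, ?_, hasOtpOmega_range hmono⟩
  · rintro β ⟨n, rfl⟩
    exact (f n).2.1
  · rintro β ⟨n, rfl⟩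
    exact (f n).2.2
  · intro α hα
    have : α ∈ Iio γ := hα
    rw [hg] at this
    obtain ⟨n, hn⟩ := this
    refine ⟨a (n + 1), ⟨n + 1, rfl⟩, ?_⟩
    have : max (a n) (g n) < a (n + 1) := hF2 _ _
    exact le_of_lt (lt_of_le_of_lt (hn ▸ le_max_right (a n) (g n)) this)

lemma exists_ladder_default {γ : Ordinal.{u}} (hγ : γ < ω₁) (hlim : Order.IsSuccLimit γ) :
    ∃ t, IsLadderAt γ t := by
  obtain ⟨t, _, ht⟩ := exists_ladder hγ hlim (s := Iio γ)
    (fun α hα => ⟨α + 1, hlim.succ_lt hα, by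
      rw [Ordinal.add_one_eq_succ]; exact Order.lt_succ _, hlim.succ_lt hα⟩)
  exact ⟨t, ht⟩

end Helpers2
section DiamondTo

universe u

lemma club_Ioo : IsClubIn {β : Ordinal.{u} | Ordinal.omega0 < β ∧ β < ω₁} := by
  refine ⟨fun β h => h.2, ?_, ?_⟩
  · intro δ hδ hδ0 H
    obtain ⟨β, hβC, _, hβδ⟩ := H 0 (pos_iff_ne_zero.2 hδ0)
    exact ⟨hβC.1.trans hβδ, hδ⟩
  · intro α hα
    refine ⟨max α Ordinal.omega0 + 1, ⟨?_, succ_lt_omega1 (max_lt hα omega0_lt_omega1)⟩, ?_⟩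
    · exact lt_of_le_of_lt (le_max_right _ _)
        (by rw [Ordinal.add_one_eq_succ]; exact Order.lt_succ _)
    · exact lt_of_le_of_lt (le_max_left _ _)
        (by rw [Ordinal.add_one_eq_succ]; exact Order.lt_succ _)

lemma diamond_CH {E : Set Ordinal.{u}} (hD : DiamondPrinciple E) :
    (2 : Cardinal.{u+1}) ^ ℵ₀ = aleph 1 := by
  obtain ⟨A, hA1, hA2⟩ := hD
  have key : ∀ B : Set Ordinal.{u}, B ⊆ Iio Ordinal.omega0 → ∃ γ, γ < ω₁ ∧ A γ = B := by
    intro B hB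
    have hB1 : B ⊆ Iio ω₁ := hB.trans (fun β (h : β < _) => h.trans omega0_lt_omega1)
    obtain ⟨γ, ⟨hγE, hγeq⟩, hγω, hγω₁⟩ := (hA2 B hB1).2 _ club_Ioo
    refine ⟨γ, hγω₁, ?_⟩
    rw [← hγeq]
    apply inter_eq_left.2
    exact hB.trans (fun β (h : β < _) => h.trans hγω)
  choose Φ hΦ1 hΦ2 using key
  have hmkIio : #(Iio (Ordinal.omega0 : Ordinal.{u})) = ℵ₀ := by
    rw [Ordinal.mk_Iio_ordinal, Ordinal.card_omega0, Cardinal.lift_aleph0]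
  have hle : (2 : Cardinal.{u+1}) ^ ℵ₀ ≤ aleph 1 := by
    rw [← hmkIio, ← Cardinal.mk_set, ← mk_Iio_omega1]
    refine Cardinal.mk_le_of_injective (f := fun S : Set (Iio (Ordinal.omega0 : Ordinal.{u})) =>
      (⟨Φ (Subtype.val '' S) (by rintro β ⟨⟨β', hβ'⟩, _, rfl⟩; exact hβ'),
        hΦ1 _ _⟩ : Iio (ω₁ : Ordinal.{u}))) ?_
    intro S S' hSS'
    have : Subtype.val '' S = Subtype.val '' S' := by
      have h1 := hΦ2 (Subtype.val '' S) (by rintro β ⟨⟨β', hβ'⟩, _, rfl⟩; exact hβ')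
      have h2 := hΦ2 (Subtype.val '' S') (by rintro β ⟨⟨β', hβ'⟩, _, rfl⟩; exact hβ')
      rw [← h1, ← h2, Subtype.mk_eq_mk.1 hSS']
    exact Set.image_injective.2 Subtype.val_injective this
  refine le_antisymm hle ?_
  rw [← succ_aleph0]
  exact Order.succ_le_of_lt (Cardinal.cantor ℵ₀)

lemma diamond_club {E : Set Ordinal.{u}} (hE' : E ⊆ LimOmega1) (hD : DiamondPrinciple E) :
    ClubPrinciple E := by
  obtain ⟨A, hA1, hA2⟩ := hD
  have hx : ∀ γ, ∃ t, (γ ∈ E → IsLadderAt γ t) ∧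
      ((γ ∈ E ∧ ∀ α, α < γ → ∃ β, β ∈ A γ ∧ α < β ∧ β < γ) → t ⊆ A γ) := by
    intro γ
    by_cases hγE : γ ∈ E
    · obtain ⟨hγ1, hγ2⟩ := hE' hγE
      by_cases hcof : ∀ α, α < γ → ∃ β, β ∈ A γ ∧ α < β ∧ β < γ
      · obtain ⟨t, hts, htl⟩ := exists_ladder hγ1 hγ2 hcof
        exact ⟨t, fun _ => htl, fun _ => hts⟩
      · obtain ⟨t, htl⟩ := exists_ladder_default hγ1 hγ2
        exact ⟨t, fun _ => htl, fun h => absurd h.2 hcof⟩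
    · exact ⟨∅, fun h => absurd h hγE, fun h => absurd h.1 hγE⟩
  choose x hx1 hx2 using hx
  refine ⟨x, fun γ hγ => hx1 γ hγ, ?_⟩
  intro y hy hmk
  have hub : ∀ α, α < ω₁ → ∃ β, β < ω₁ ∧ α < β ∧ β ∈ y := by
    intro α hα
    obtain ⟨β, hβy, hβ⟩ := unbounded_of_mk_eq hmk hα
    exact ⟨β, hy hβy, hβ, hβy⟩
  have hclub : IsClubIn {δ : Ordinal.{u} | δ < ω₁ ∧ 0 < δ ∧
      ∀ α, α < δ → ∃ β ∈ y, α < β ∧ β < δ} := by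
    refine ⟨fun δ h => h.1, ?_, ?_⟩
    · intro δ hδ hδ0 H
      refine ⟨hδ, pos_iff_ne_zero.2 hδ0, ?_⟩
      intro α hα
      obtain ⟨β, hβC, hαβ, hβδ⟩ := H α hα
      obtain ⟨ζ, hζy, hαζ, hζβ⟩ := hβC.2.2 α hαβ
      exact ⟨ζ, hζy, hαζ, hζβ.trans hβδ⟩
    · intro α hα
      obtain ⟨b, hb1, hb2, hb3, hb4⟩ := omega_chain (Q := fun _ β => β ∈ y) hub hα
      have hsup : (⨆ n, b n) < ω₁ := nat_sup_lt_omega1 b hb1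
      have hlt : ∀ n, b n < ⨆ n, b n :=
        fun n => lt_of_lt_of_le (hb2 (Nat.lt_succ_self n)) (Ordinal.le_iSup b (n + 1))
      refine ⟨⨆ n, b n, ⟨hsup, lt_of_le_of_lt zero_le (hlt 0), ?_⟩, hb3.trans (hlt 0)⟩
      intro α' hα'
      obtain ⟨n, hn1, _⟩ := lt_sup_chain hb2 hα'
      exact ⟨b (n + 1), hb4 n, hn1.trans (hb2 (Nat.lt_succ_self n)), hlt (n + 1)⟩
  obtain ⟨γ, ⟨hγE, hγeq⟩, hγC⟩ := (hA2 y hy).2 _ hclub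
  refine ⟨γ, hγE, ?_⟩
  have hcof : ∀ α, α < γ → ∃ β, β ∈ A γ ∧ α < β ∧ β < γ := by
    intro α hα
    obtain ⟨β, hβy, hαβ, hβγ⟩ := hγC.2.2 α hα
    exact ⟨β, by rw [← hγeq]; exact ⟨hβy, hβγ⟩, hαβ, hβγ⟩
  exact (hx2 γ ⟨hγE, hcof⟩).trans (by rw [← hγeq]; exact inter_subset_left)

end DiamondTo
section Coding

universe u

lemma exists_W (hCH : (2 : Cardinal.{u+1}) ^ ℵ₀ = aleph 1) :
    ∃ W : Ordinal.{u} → Set Ordinal.{u},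
      ∀ (s : Set Ordinal.{u}) (c : Ordinal.{u}), c < ω₁ → s ⊆ Iio c →
        ∀ α, α < ω₁ → ∃ ν, ν < ω₁ ∧ α < ν ∧ W ν = s := by
  have hT : #{t : Set Ordinal.{u} // t ⊆ Iio (ω₁ : Ordinal.{u}) ∧ #t ≤ ℵ₀} ≤ aleph 1 := by
    calc #{t : Set Ordinal.{u} // t ⊆ Iio (ω₁ : Ordinal.{u}) ∧ #t ≤ ℵ₀}
        ≤ max #(Iio (ω₁ : Ordinal.{u})) ℵ₀ ^ (ℵ₀ : Cardinal.{u+1}) :=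
          Cardinal.mk_bounded_subset_le _ _
      _ = aleph 1 := by
          rw [mk_Iio_omega1, max_eq_left (aleph0_le_aleph 1), ← hCH, ← Cardinal.power_mul,
            Cardinal.aleph0_mul_aleph0, hCH]
  rw [← mk_Iio_omega1, Cardinal.le_def] at hT
  obtain ⟨J⟩ := hT
  have hTne : Nonempty {t : Set Ordinal.{u} // t ⊆ Iio (ω₁ : Ordinal.{u}) ∧ #t ≤ ℵ₀} :=
    ⟨⟨∅, empty_subset _, by simp⟩⟩
  set σ := Function.invFun J with hσ
  have hσJ : ∀ t, σ (J t) = t := Function.leftInverse_invFun J.injective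
  have hmkprod : #((Iio (ω₁ : Ordinal.{u})) × (Iio (ω₁ : Ordinal.{u}))) =
      #(Iio (ω₁ : Ordinal.{u})) := by
    rw [Cardinal.mk_prod, Cardinal.lift_id, mk_Iio_omega1,
      Cardinal.mul_eq_self (aleph0_le_aleph 1)]
  obtain ⟨e⟩ := Cardinal.eq.1 hmkprod.symm
  refine ⟨fun ν => if h : ν < ω₁ then ((σ (e ⟨ν, h⟩).1) : _).1 else ∅, ?_⟩
  intro s c hc hs α hα
  have hsT : s ⊆ Iio (ω₁ : Ordinal.{u}) ∧ #s ≤ ℵ₀ := by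
    constructor
    · exact hs.trans (fun β (h : β < c) => h.trans hc)
    · exact Cardinal.le_aleph0_iff_set_countable.2 (countable_of_subset_Iio hc hs)
  set t : {t : Set Ordinal.{u} // t ⊆ Iio (ω₁ : Ordinal.{u}) ∧ #t ≤ ℵ₀} := ⟨s, hsT⟩ with ht
  set ι : (Iio (ω₁ : Ordinal.{u})) → Ordinal.{u} := fun b => (e.symm (J t, b) : _).1 with hι
  have hιinj : Function.Injective ι := by
    intro b b' hbb'
    have := Subtype.ext hbb' (p := fun o => o < ω₁)
    have h2 : e.symm (J t, b) = e.symm (J t, b') := Subtype.ext hbb'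
    have := e.symm.injective h2
    exact (Prod.ext_iff.1 this).2
  have hιW : ∀ b, ι b < ω₁ ∧
      (if h : ι b < ω₁ then ((σ (e ⟨ι b, h⟩).1) : _).1 else ∅) = s := by
    intro b
    have hlt : ι b < ω₁ := (e.symm (J t, b)).2
    refine ⟨hlt, ?_⟩
    rw [dif_pos hlt]
    have : (⟨ι b, hlt⟩ : Iio (ω₁ : Ordinal.{u})) = e.symm (J t, b) := Subtype.ext rfl
    rw [this, Equiv.apply_symm_apply, hσJ]
  have hmkY : #(range ι) = aleph 1 := by
    rw [Cardinal.mk_range_eq ι hιinj, mk_Iio_omega1]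
  obtain ⟨ν, hνY, hαν⟩ := unbounded_of_mk_eq hmkY hα
  obtain ⟨b, rfl⟩ := hνY
  exact ⟨ι b, (hιW b).1, hαν, (hιW b).2⟩

end Coding
section MainDirection

universe u

lemma club_CH_diamond {E : Set Ordinal.{u}} (hE' : E ⊆ LimOmega1)
    (hC : ClubPrinciple E) (hCH : (2 : Cardinal.{u+1}) ^ ℵ₀ = aleph 1) :
    DiamondPrinciple E := by
  obtain ⟨x, hx1, hx2⟩ := hC
  obtain ⟨W, hW⟩ := exists_W hCH
  refine ⟨fun γ => Iio γ ∩ ⋃ ν ∈ x γ, W ν, fun γ _ => inter_subset_left, ?_⟩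
  intro B hB
  refine ⟨fun γ hγ => (hE' hγ.1).1, ?_⟩
  intro C hclubC
  have hstep : ∀ c, c < ω₁ → ∃ ν, ν < ω₁ ∧ c < ν ∧ W ν = B ∩ Iio c := fun c hc =>
    hW (B ∩ Iio c) c hc inter_subset_right c hc
  choose h hh1 hh2 hh3 using hstep
  set H : Ordinal.{u} → Ordinal.{u} := fun c => if hc : c < ω₁ then h c hc else 0 with hHdef
  have hH1 : ∀ c, c < ω₁ → H c < ω₁ ∧ c < H c ∧ W (H c) = B ∩ Iio c := by
    intro c hc
    simp only [hHdef, dif_pos hc]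
    exact ⟨hh1 c hc, hh2 c hc, hh3 c hc⟩
  set C₁ : Set Ordinal.{u} := {c | c ∈ C ∧ ∀ d ∈ C, d < c → H d < c} with hC₁def
  have hC₁sub : C₁ ⊆ Iio (ω₁ : Ordinal.{u}) := fun c hc => hclubC.1 hc.1
  have hC₁ub : ∀ α, α < ω₁ → ∃ c ∈ C₁, α < c := by
    intro α hα
    have step : ∀ β, β < ω₁ →
        ∃ β', β' < ω₁ ∧ β < β' ∧ (β' ∈ C ∧ ∀ d ∈ C, d < β → H d < β') := by
      intro β hβ
      have hcnt : (H '' (C ∩ Iio β)).Countable :=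
        (countable_of_subset_Iio hβ inter_subset_right).image H
      have himg : ∀ ζ ∈ H '' (C ∩ Iio β), ζ < ω₁ := by
        rintro ζ ⟨d, ⟨hdC, hdβ⟩, rfl⟩
        exact (hH1 d (lt_trans hdβ hβ)).1
      obtain ⟨δ, hδ, hbd⟩ := exists_bound_of_countable hcnt himg
      obtain ⟨β', hβ'C, hβ'⟩ := hclubC.2.2 (max β δ) (max_lt hβ hδ)
      refine ⟨β', hclubC.1 hβ'C, lt_of_le_of_lt (le_max_left _ _) hβ', hβ'C, ?_⟩
      intro d hdC hdβ
      exact lt_trans (hbd _ ⟨d, ⟨hdC, hdβ⟩, rfl⟩) (lt_of_le_of_lt (le_max_right β δ) hβ')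
    obtain ⟨b, hb1, hb2, hb3, hb4⟩ :=
      omega_chain (Q := fun β β' => β' ∈ C ∧ ∀ d ∈ C, d < β → H d < β') step hα
    have hδω : (⨆ n, b n) < ω₁ := nat_sup_lt_omega1 b hb1
    have hlt : ∀ n, b n < ⨆ n, b n :=
      fun n => lt_of_lt_of_le (hb2 n.lt_succ_self) (Ordinal.le_iSup b (n + 1))
    have hδC : (⨆ n, b n) ∈ C := by
      apply hclubC.2.1 _ hδω
      · exact (lt_of_le_of_lt zero_le (hlt 0)).ne'
      · intro α' hα'
        obtain ⟨n, hn1, _⟩ := lt_sup_chain hb2 hα'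
        exact ⟨b (n + 1), (hb4 n).1, hn1.trans (hb2 n.lt_succ_self), hlt (n + 1)⟩
    refine ⟨⨆ n, b n, ⟨hδC, ?_⟩, lt_of_lt_of_le hb3 (Ordinal.le_iSup b 0)⟩
    intro d hdC hdδ
    obtain ⟨n, hn1, _⟩ := lt_sup_chain hb2 hdδ
    exact lt_trans ((hb4 n).2 d hdC hn1) (hlt (n + 1))
  have hC₁mk : #C₁ = aleph 1 := mk_eq_aleph1_of_unbounded hC₁sub hC₁ub
  have hHmono : ∀ c ∈ C₁, ∀ c' ∈ C₁, c < c' → H c < c' :=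
    fun c hc c' hc' hlt => hc'.2 c hc.1 hlt
  have hYsub : H '' C₁ ⊆ Iio (ω₁ : Ordinal.{u}) := by
    rintro β ⟨c, hc, rfl⟩
    exact (hH1 c (hC₁sub hc)).1
  have hinjOn : Set.InjOn H C₁ := by
    intro c hc c' hc' heq
    by_contra hne
    rcases lt_or_gt_of_ne hne with hl | hl
    · exact absurd heq (ne_of_lt (lt_trans (hHmono c hc c' hc' hl) (hH1 c' (hC₁sub hc')).2.1))
    · exact absurd heq.symm
        (ne_of_lt (lt_trans (hHmono c' hc' c hc hl) (hH1 c (hC₁sub hc)).2.1))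
  have hYmk : #(H '' C₁) = aleph 1 := by
    rw [Cardinal.mk_image_eq_of_injOn H C₁ hinjOn, hC₁mk]
  obtain ⟨γ, hγE, hxγY⟩ := hx2 (H '' C₁) hYsub hYmk
  obtain ⟨hγω, hγlim⟩ := hE' hγE
  obtain ⟨hxsub, hxcof, _⟩ := hx1 γ hγE
  have hxcof' : ∀ α, α < γ → ∃ ν ∈ x γ, α < ν := by
    intro α hα
    obtain ⟨ν, hν, hle⟩ := hxcof (α + 1) (by
      rw [Ordinal.add_one_eq_succ]; exact hγlim.succ_lt hα)
    refine ⟨ν, hν, lt_of_lt_of_le ?_ hle⟩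
    rw [Ordinal.add_one_eq_succ]; exact Order.lt_succ _
  have key : ∀ α, α < γ → ∃ c' ∈ C₁, α < c' ∧ c' < γ ∧ H c' ∈ x γ := by
    intro α hα
    obtain ⟨ν, hνx, hαν⟩ := hxcof' α hα
    obtain ⟨ν', hν'x, hνν'⟩ := hxcof' ν (hxsub hνx)
    obtain ⟨c, hc, hcν⟩ := hxγY hνx
    obtain ⟨c', hc', hc'ν'⟩ := hxγY hν'x
    have hcc' : c < c' := by
      rcases lt_trichotomy c c' with hl | hl | hl
      · exact hl
      · exfalso
        rw [hl, hc'ν'] at hcν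
        exact (ne_of_lt hνν') hcν.symm
      · exfalso
        have h1 : H c' < c := hHmono c' hc' c hc hl
        have h2 : c < H c := (hH1 c (hC₁sub hc)).2.1
        rw [hcν, hc'ν'] at *
        exact absurd (lt_trans h1 h2) (not_lt.2 (le_of_lt hνν'))
    have h1 : H c < c' := hHmono c hc c' hc' hcc'
    refine ⟨c', hc', ?_, ?_, by rw [hc'ν']; exact hν'x⟩
    · calc α < ν := hαν
        _ = H c := hcν.symm
        _ < c' := h1
    · calc c' < H c' := (hH1 c' (hC₁sub hc')).2.1
        _ = ν' := hc'ν'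
        _ < γ := hxsub hν'x
  have hγC : γ ∈ C := by
    apply hclubC.2.1 γ hγω hγlim.pos.ne'
    intro α hα
    obtain ⟨c', hc', hαc', hc'γ, _⟩ := key α hα
    exact ⟨c', hc'.1, hαc', hc'γ⟩
  have heq : B ∩ Iio γ = Iio γ ∩ ⋃ ν ∈ x γ, W ν := by
    ext β
    constructor
    · rintro ⟨hβB, hβγ⟩
      obtain ⟨c', hc', hβc', hc'γ, hν'x⟩ := key β hβγ
      refine ⟨hβγ, ?_⟩
      rw [mem_iUnion₂]
      refine ⟨H c', hν'x, ?_⟩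
      rw [(hH1 c' (hC₁sub hc')).2.2]
      exact ⟨hβB, hβc'⟩
    · rintro ⟨hβγ, hβU⟩
      rw [mem_iUnion₂] at hβU
      obtain ⟨ν, hνx, hβW⟩ := hβU
      obtain ⟨c, hc, rfl⟩ := hxγY hνx
      rw [(hH1 c (hC₁sub hc)).2.2] at hβW
      exact ⟨hβW.1, hβγ⟩
  exact ⟨γ, ⟨hγE, heq⟩, hγC⟩

end MainDirection

theorem club_and_CH_iff_diamond (E : Set Ordinal) (hE : IsStatIn E)
    (hE' : E ⊆ LimOmega1) :
    (ClubPrinciple E ∧ (2 : Cardinal) ^ ℵ₀ = aleph 1) ↔ DiamondPrinciple E := by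
  constructor
  · rintro ⟨hclub, hch⟩
    exact club_CH_diamond hE' hclub (CH_transfer.mp hch)
  · intro hD
    exact ⟨diamond_club hE' hD, CH_transfer.mp (diamond_CH hD)⟩
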